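/- For constants s>0, τ>0, α>0 and S ≥ 0, the function t ↦ H(1,S,t) = (s+S)/(τ+t)^α + α·s·t/τ^{α+1} − (s+S)/τ^α on [0,∞) attains its unique minimum at t* = τ·((1 + S/s)^{1/(α+1)} − 1) ≥ 0. -/

import Mathlib

open Real

noncomputable def fH (s τ α S t : ℝ) : ℝ :=
  (s + S) / (τ + t) ^ α + α * s * t / τ ^ (α + 1) - (s + S) / τ ^ α

lemma hasDerivAt_fH (s τ α S t : ℝ) (hτ : 0 < τ) (hτt : 0 < τ + t) :
    HasDerivAt (fH s τ α S)
      (α * s / τ ^ (α + 1) - α * (s + S) / (τ + t) ^ (α + 1)) t := by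
  have hne : (τ + t) ^ α ≠ 0 := (rpow_pos_of_pos hτt α).ne'
  have h1 : HasDerivAt (fun t => (τ + t) ^ α) (α * (τ + t) ^ (α - 1) * 1) t := by
    exact (Real.hasDerivAt_rpow_const (Or.inl hτt.ne')).comp t
      ((hasDerivAt_id t).const_add τ)
  have h2 : HasDerivAt (fun t => (s + S) / (τ + t) ^ α)
      ((0 * (τ + t) ^ α - (s + S) * (α * (τ + t) ^ (α - 1) * 1)) / ((τ + t) ^ α) ^ 2) t :=
    (hasDerivAt_const t (s + S)).div h1 hne
  have h3 : HasDerivAt (fun t => α * s * t / τ ^ (α + 1)) (α * s * 1 / τ ^ (α + 1)) t :=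
    ((hasDerivAt_id t).const_mul (α * s)).div_const _
  have h := (h2.add h3).sub_const ((s + S) / τ ^ α)
  refine h.congr_deriv (Eq.symm ?_)
  have e1 : ((τ + t) ^ α) ^ 2 = (τ + t) ^ (α + α) := by
    rw [sq, ← Real.rpow_add hτt]
  have e2 : (τ + t) ^ (α + 1) ≠ 0 := (rpow_pos_of_pos hτt _).ne'
  have e3 : (τ + t) ^ (α + α) ≠ 0 := (rpow_pos_of_pos hτt _).ne'
  have e4 : τ ^ (α + 1) ≠ 0 := (rpow_pos_of_pos hτ _).ne'
  have key : (τ + t) ^ (α - 1) * (τ + t) ^ (α + 1) = (τ + t) ^ (α + α) := by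
    rw [← Real.rpow_add hτt]; ring_nf
  rw [e1, zero_mul, zero_sub, mul_one, mul_one]
  have e5 : α * (s + S) / (τ + t) ^ (α + 1)
      = (s + S) * (α * (τ + t) ^ (α - 1)) / (τ + t) ^ (α + α) := by
    rw [div_eq_div_iff e2 e3]
    linear_combination (-(α * (s + S))) * key
  rw [sub_eq_add_neg, e5, ← neg_div]
  ring

theorem stmt_6 (s τ α S : ℝ) (hs : 0 < s) (hτ : 0 < τ) (hα : 0 < α)
    (hS : 0 ≤ S) :
    0 ≤ τ * ((1 + S / s) ^ (1 / (α + 1)) - 1) ∧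
    ∀ t ∈ Set.Ici (0 : ℝ), t ≠ τ * ((1 + S / s) ^ (1 / (α + 1)) - 1) →
      (s + S) / (τ + τ * ((1 + S / s) ^ (1 / (α + 1)) - 1)) ^ α
          + α * s * (τ * ((1 + S / s) ^ (1 / (α + 1)) - 1)) / τ ^ (α + 1)
          - (s + S) / τ ^ α
        < (s + S) / (τ + t) ^ α + α * s * t / τ ^ (α + 1) - (s + S) / τ ^ α := by
  set c : ℝ := (1 + S / s) ^ (1 / (α + 1)) with hc
  set T : ℝ := τ * (c - 1) with hT
  have hsS : 0 < 1 + S / s := by positivity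
  have hα1 : 0 < α + 1 := by linarith
  have hc1 : 1 ≤ c := Real.one_le_rpow (by nlinarith [div_nonneg hS hs.le]) (by positivity)
  have hT0 : 0 ≤ T := by
    have : 0 ≤ c - 1 := by linarith
    positivity
  refine ⟨hT0, ?_⟩
  -- key : (τ + T) = τ * c and (τ*c)^(α+1) = τ^(α+1)*(1+S/s)
  have hτT : τ + T = τ * c := by rw [hT]; ring
  have hcpos : 0 < c := lt_of_lt_of_le one_pos hc1
  have hkey : (τ * c) ^ (α + 1) = τ ^ (α + 1) * (1 + S / s) := by
    rw [Real.mul_rpow hτ.le hcpos.le, hc, ← Real.rpow_mul hsS.le, one_div,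
      inv_mul_cancel₀ hα1.ne', Real.rpow_one]
  -- sign of derivative
  have hsign : ∀ t : ℝ, 0 ≤ t →
      ((α * s / τ ^ (α + 1) - α * (s + S) / (τ + t) ^ (α + 1) < 0 ↔ t < T) ∧
       (0 < α * s / τ ^ (α + 1) - α * (s + S) / (τ + t) ^ (α + 1) ↔ T < t)) := by
    intro t ht
    have hτt : 0 < τ + t := by linarith
    have hp1 : 0 < (τ + t) ^ (α + 1) := rpow_pos_of_pos hτt _
    have hp2 : 0 < τ ^ (α + 1) := rpow_pos_of_pos hτ _
    have hmain : ∀ u v : ℝ, (u < v ↔ (τ + u) < (τ + v)) := fun u v => by constructor <;> intro <;> linarith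
    have hbase : ∀ t' : ℝ, 0 ≤ t' → ((τ + t') ^ (α + 1) < (τ + T) ^ (α + 1) ↔ t' < T) := by
      intro t' ht'
      rw [Real.rpow_lt_rpow_iff (by linarith) (by linarith) hα1]
      exact (hmain t' T).symm
    have hTk : (τ + T) ^ (α + 1) = τ ^ (α + 1) * (1 + S / s) := by rw [hτT, hkey]
    have e : ∀ Y : ℝ, α * (s + S) * Y = α * (s * (Y * (1 + S / s))) := by
      intro Y; field_simp
    have hiff1 : ∀ X Y : ℝ, (α * s * X < α * (s + S) * Y ↔ X < Y * (1 + S / s)) := by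
      intro X Y
      rw [show α * s * X = α * (s * X) by ring, e Y, mul_lt_mul_iff_right₀ hα, mul_lt_mul_iff_right₀ hs]
    have hiff2 : ∀ X Y : ℝ, (α * (s + S) * Y < α * s * X ↔ Y * (1 + S / s) < X) := by
      intro X Y
      rw [show α * s * X = α * (s * X) by ring, e Y, mul_lt_mul_iff_right₀ hα, mul_lt_mul_iff_right₀ hs]
    have hTk' : (τ + T) ^ (α + 1) = (1 + S / s) * τ ^ (α + 1) := by rw [hTk]; ring
    constructor
    · rw [sub_neg, div_lt_div_iff₀ hp2 hp1, hiff1, mul_comm (τ ^ (α + 1)) (1 + S / s), ← hTk']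
      exact hbase t ht
    · rw [sub_pos, div_lt_div_iff₀ hp1 hp2, hiff2, mul_comm (τ ^ (α + 1)) (1 + S / s), ← hTk']
      rw [Real.rpow_lt_rpow_iff (by linarith) (by linarith) hα1]
      exact (hmain T t).symm
  -- differentiability / continuity
  have hderiv : ∀ t : ℝ, 0 ≤ t → HasDerivAt (fH s τ α S)
      (α * s / τ ^ (α + 1) - α * (s + S) / (τ + t) ^ (α + 1)) t :=
    fun t ht => hasDerivAt_fH s τ α S t hτ (by linarith)
  have hcont : ContinuousOn (fH s τ α S) (Set.Ici 0) :=
    fun t ht => ((hderiv t ht).differentiableAt.continuousAt).continuousWithinAt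
  -- strict anti on [0, T]
  have hanti : StrictAntiOn (fH s τ α S) (Set.Icc 0 T) := by
    apply strictAntiOn_of_deriv_neg (convex_Icc 0 T)
      (hcont.mono (Set.Icc_subset_Ici_self))
    intro x hx
    rw [interior_Icc] at hx
    rw [(hderiv x hx.1.le).deriv]
    exact ((hsign x hx.1.le).1).2 hx.2
  -- strict mono on [T, ∞)
  have hmono : StrictMonoOn (fH s τ α S) (Set.Ici T) := by
    apply strictMonoOn_of_deriv_pos (convex_Ici T)
      (hcont.mono (Set.Ici_subset_Ici.2 hT0))
    intro x hx
    rw [interior_Ici] at hx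
    have hx0 : 0 ≤ x := le_trans hT0 (le_of_lt hx)
    rw [(hderiv x hx0).deriv]
    exact ((hsign x hx0).2).2 hx
  intro t ht htne
  have ht0 : 0 ≤ t := ht
  have goal : fH s τ α S T < fH s τ α S t := by
    rcases lt_or_gt_of_ne htne with h | h
    · exact hanti ⟨ht0, h.le⟩ ⟨hT0, le_refl T⟩ h
    · exact hmono (Set.self_mem_Ici) h.le h
  exact goal
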